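/- Let N ≥ 3 be an integer and θ_1,…,θ_N real with ∑_{k=1}^N θ_k = 2π and sin(θ_N) ≠ 0, and let λ ∈ ℝ^N satisfy the closing condition ∑_{k=1}^N λ_k e^{−iφ_k} = 0. Let σ be a cyclic permutation of {1,…,N} (i.e., σ(j) ≡ j + m (mod N) for some m, with representatives in {1,…,N}) such that sin(φ_{σ(N)} − φ_{σ(N−1)}) ≠ 0. Then −(1/2)∑_{1≤j≤N−2} [sin(φ_{σ(N)}−φ_{σ(j)})·sin(φ_{σ(N−1)}−φ_{σ(j)}) / sin(φ_{σ(N)}−φ_{σ(N−1)})]·λ_{σ(j)}² − ∑_{1≤j<k≤N−2} [sin(φ_{σ(N)}−φ_{σ(j)})·sin(φ_{σ(N−1)}−φ_{σ(k)}) / sin(φ_{σ(N)}−φ_{σ(N−1)})]·λ_{σ(j)}·λ_{σ(k)} = Q((λ_1,…,λ_{N−2})); i.e., the signed-area formula is invariant under cyclic relabelling of the polygon's vertices. -/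

import Mathlib

/-- The cumulative angle `φ_k = ∑_{a=1}^k θ_a`. -/
noncomputable def phiAng (θ : ℕ → ℝ) (k : ℕ) : ℝ := ∑ a ∈ Finset.Icc 1 k, θ a

/-- The signed-area quadratic form `Q` on `ℝ^{N-2}` (coordinates indexed `1,…,N-2`). -/
noncomputable def Qform (N : ℕ) (θ : ℕ → ℝ) (lam : ℕ → ℝ) : ℝ :=
  -(1/2) * ∑ j ∈ Finset.Icc 1 (N-2),
      Real.sin (phiAng θ N - phiAng θ j) * Real.sin (phiAng θ (N-1) - phiAng θ j)
        / Real.sin (θ N) * (lam j)^2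
  - ∑ j ∈ Finset.Icc 1 (N-2), ∑ k ∈ Finset.Icc (j+1) (N-2),
      Real.sin (phiAng θ N - phiAng θ j) * Real.sin (phiAng θ (N-1) - phiAng θ k)
        / Real.sin (θ N) * (lam j * lam k)

/-- The vector `v`, `v_j = -sin(φ_N - φ_j)/sin(θ_N)`. -/
noncomputable def vvec (N : ℕ) (θ : ℕ → ℝ) (j : ℕ) : ℝ :=
  -(Real.sin (phiAng θ N - phiAng θ j)) / Real.sin (θ N)

/-- The vector `w`, `w_j = sin(φ_{N-1} - φ_j)/sin(θ_N)`. -/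
noncomputable def wvec (N : ℕ) (θ : ℕ → ℝ) (j : ℕ) : ℝ :=
  Real.sin (phiAng θ (N-1) - phiAng θ j) / Real.sin (θ N)

/-- The extended side lengths: `λ_k` for `k ≤ N-2`, `λ_{N-1} = vᵀλ`, `λ_N = wᵀλ`. -/
noncomputable def lamExt (N : ℕ) (θ : ℕ → ℝ) (lam : ℕ → ℝ) (k : ℕ) : ℝ :=
  if k = N - 1 then ∑ j ∈ Finset.Icc 1 (N-2), vvec N θ j * lam j
  else if k = N then ∑ j ∈ Finset.Icc 1 (N-2), wvec N θ j * lam j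
  else lam k


section AuxCyclic
open Finset
private lemma exp_decomp (x y : ℝ) : ((x:ℂ) * Complex.exp (-(y:ℂ) * Complex.I))
    = Complex.ofReal (x * Real.cos y) + Complex.ofReal (-(x * Real.sin y)) * Complex.I := by
  rw [Complex.exp_mul_I, Complex.cos_neg, Complex.sin_neg,
    ← Complex.ofReal_cos, ← Complex.ofReal_sin]
  push_cast
  ring

/-- ∑ over `Icc a N` splits off the top two terms. -/

private lemma pluck (x y u v : ℝ) :
    Real.sin (x - u) * Real.sin (y - v) - Real.sin (x - v) * Real.sin (y - u)
      = Real.sin (x - y) * Real.sin (u - v) := by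
  simp only [Real.sin_sub, Real.cos_sub]; ring

private lemma sum_split {M : Type*} [AddCommMonoid M] (f : ℕ → M) {a N : ℕ}
    (h : a ≤ N - 1) (hN : 2 ≤ N) :
    ∑ k ∈ Icc a N, f k = (∑ k ∈ Icc a (N-2), f k) + f (N-1) + f N := by
  obtain ⟨n, rfl⟩ : ∃ n, N = n + 2 := ⟨N - 2, by omega⟩
  have h1 : n + 2 = (n + 1) + 1 := rfl
  rw [h1, Finset.sum_Icc_succ_top (by omega), Finset.sum_Icc_succ_top (by omega)]
  simp [Nat.add_sub_cancel]

private lemma sq_split (n : ℕ) (F : ℕ → ℕ → ℝ) :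
    ∑ j ∈ Icc 1 n, ∑ k ∈ Icc 1 n, F j k
      = (∑ j ∈ Icc 1 n, F j j)
        + ∑ j ∈ Icc 1 n, ∑ k ∈ Icc (j+1) n, (F j k + F k j) := by
  induction n with
  | zero => simp
  | succ n ih =>
      have e1 : ∀ (g : ℕ → ℝ), ∑ k ∈ Icc 1 (n+1), g k = (∑ k ∈ Icc 1 n, g k) + g (n+1) :=
        fun g => Finset.sum_Icc_succ_top (by omega) g
      rw [e1 (fun j => ∑ k ∈ Icc 1 (n+1), F j k), e1 (fun j => F j j),
        e1 (fun j => ∑ k ∈ Icc (j+1) (n+1), (F j k + F k j))]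
      have e2 : ∀ j ∈ Icc 1 n, ∑ k ∈ Icc 1 (n+1), F j k = (∑ k ∈ Icc 1 n, F j k) + F j (n+1) :=
        fun j _ => Finset.sum_Icc_succ_top (by omega) _
      have e3 : ∀ j ∈ Icc 1 n, ∑ k ∈ Icc (j+1) (n+1), (F j k + F k j)
          = (∑ k ∈ Icc (j+1) n, (F j k + F k j)) + (F j (n+1) + F (n+1) j) := by
        intro j hj
        simp only [mem_Icc] at hj
        exact Finset.sum_Icc_succ_top (by omega) _
      rw [Finset.sum_congr rfl e2, Finset.sum_congr rfl e3]
      have e4 : Icc (n+1+1) (n+1) = (∅ : Finset ℕ) := Finset.Icc_eq_empty (by omega)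
      rw [e4]
      simp only [Finset.sum_add_distrib, Finset.sum_empty]
      rw [ih, e1 (fun k => F (n+1) k)]
      simp only [Finset.sum_add_distrib]
      ring

/-- Reindexing a sum over `Icc 1 N` along the cyclic shift `k ↦ (k+m-1) % N + 1`. -/

private lemma modstep (N : ℕ) (u v k : ℕ) (hk1 : 1 ≤ k) (hkN : k ≤ N)
    (huv : (u + v) % N = 0) : (((k + u - 1) % N + 1) + v - 1) % N + 1 = k := by
  have h1 : ((k + u - 1) % N + 1) + v - 1 = (k + u - 1) % N + v := by omega
  rw [h1, Nat.mod_add_mod]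
  have h2 : k + u - 1 + v = (k - 1) + (u + v) := by omega
  rw [h2, Nat.add_mod, huv]
  have h3 : (k - 1) % N = k - 1 := Nat.mod_eq_of_lt (by omega)
  simp [h3]
  omega

private lemma modzero (N m : ℕ) (hN : 1 ≤ N) : (m + (N - m % N)) % N = 0 := by
  have hd := Nat.div_add_mod m N
  have hlt : m % N < N := Nat.mod_lt _ (by omega)
  have h : m + (N - m % N) = N * (m / N) + N := by omega
  rw [h, show N * (m / N) + N = N * (m / N + 1) by ring, Nat.mul_mod_right]

private lemma reidx (N : ℕ) (hN : 1 ≤ N) (h : ℕ → ℝ) (m : ℕ) :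
    ∑ k ∈ Icc 1 N, h ((k + m - 1) % N + 1) = ∑ k ∈ Icc 1 N, h k := by
  apply Finset.sum_nbij' (i := fun k => (k + m - 1) % N + 1)
    (j := fun k => (k + (N - m % N) - 1) % N + 1)
  · intro a ha
    simp only [mem_Icc] at ha ⊢
    have : (a + m - 1) % N < N := Nat.mod_lt _ (by omega)
    omega
  · intro a ha
    simp only [mem_Icc] at ha ⊢
    have : (a + (N - m % N) - 1) % N < N := Nat.mod_lt _ (by omega)
    omega
  · intro a ha
    simp only [mem_Icc] at ha
    exact modstep N m (N - m % N) a ha.1 ha.2 (modzero N m hN)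
  · intro a ha
    simp only [mem_Icc] at ha
    refine modstep N (N - m % N) m a ha.1 ha.2 ?_
    rw [Nat.add_comm]
    exact modzero N m hN
  · intro a _; rfl

private lemma shift1 (N : ℕ) (hN : 1 ≤ N) (f : ℕ → ℕ → ℝ)
    (hanti : ∀ j k, f j k = - f k j)
    (hrow : ∀ j, ∑ k ∈ Icc 1 N, f j k = 0) :
    ∑ j ∈ Icc 1 N, ∑ k ∈ Icc (j+1) N, f (j % N + 1) (k % N + 1)
      = ∑ j ∈ Icc 1 N, ∑ k ∈ Icc (j+1) N, f j k := by
  obtain ⟨n, rfl⟩ : ∃ n, N = n + 1 := ⟨N - 1, by omega⟩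
  have hshift : ∀ (a : ℕ) (G : ℕ → ℝ), ∑ j ∈ Icc a n, G (j+1) = ∑ j ∈ Icc (a+1) (n+1), G j := by
    intro a G
    apply Finset.sum_nbij' (i := fun x => x + 1) (j := fun x => x - 1) <;>
      (intro x hx; simp only [mem_Icc] at hx ⊢) <;> omega
  -- LHS: split off j = n+1 (empty inner sum)
  rw [Finset.sum_Icc_succ_top (show 1 ≤ n+1 by omega)]
  rw [show Icc ((n+1)+1) (n+1) = ∅ from Finset.Icc_eq_empty (by omega), Finset.sum_empty, add_zero]
  have hin : ∀ j ∈ Icc 1 n, ∑ k ∈ Icc (j+1) (n+1), f (j % (n+1) + 1) (k % (n+1) + 1)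
      = (∑ k ∈ Icc (j+1) n, f (j+1) (k+1)) + f (j+1) 1 := by
    intro j hj
    simp only [mem_Icc] at hj
    rw [Finset.sum_Icc_succ_top (by omega)]
    congr 1
    · apply Finset.sum_congr rfl
      intro k hk
      simp only [mem_Icc] at hk
      rw [Nat.mod_eq_of_lt (show j < n+1 by omega), Nat.mod_eq_of_lt (show k < n+1 by omega)]
    · rw [Nat.mod_eq_of_lt (show j < n+1 by omega), Nat.mod_self]
  rw [Finset.sum_congr rfl hin, Finset.sum_add_distrib]
  -- RHS: split off j = 1
  have hsplit : Icc 1 (n+1) = insert 1 (Icc 2 (n+1)) := by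
    ext x; simp only [mem_Icc, mem_insert]; omega
  conv_rhs => rw [hsplit, Finset.sum_insert (by simp)]
  have hdbl : ∑ j ∈ Icc 1 n, ∑ k ∈ Icc (j+1) n, f (j+1) (k+1)
      = ∑ j ∈ Icc 2 (n+1), ∑ k ∈ Icc (j+1) (n+1), f j k := by
    rw [← hshift 1 (fun j => ∑ k ∈ Icc (j+1) (n+1), f j k)]
    exact Finset.sum_congr rfl fun j _ => hshift (j+1) (fun k => f (j+1) k)
  rw [hdbl, hshift 1 (fun j => f j 1)]
  -- remains: ∑_{j∈Icc 2 (n+1)} f j 1 vs ∑_{k∈Icc 2 (n+1)} f 1 k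
  have hf11 : f 1 1 = 0 := by have := hanti 1 1; linarith
  have hI : ∑ k ∈ Icc 2 (n+1), f 1 k = 0 := by
    have h0 := hrow 1
    rw [hsplit, Finset.sum_insert (by simp), hf11, zero_add] at h0
    exact h0
  have hJ : ∑ j ∈ Icc 2 (n+1), f j 1 = 0 := by
    rw [show (∑ j ∈ Icc 2 (n+1), f j 1) = ∑ j ∈ Icc 2 (n+1), -(f 1 j) from
      Finset.sum_congr rfl fun j _ => hanti j 1, Finset.sum_neg_distrib, hI, neg_zero]
  rw [hI, hJ]
  ring

private lemma cyc (N : ℕ) (hN : 1 ≤ N) (c s : ℕ → ℝ)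
    (hc : ∑ k ∈ Icc 1 N, c k = 0) (hs : ∑ k ∈ Icc 1 N, s k = 0) (m : ℕ) :
    ∑ j ∈ Icc 1 N, ∑ k ∈ Icc (j+1) N,
        (s ((j + m - 1) % N + 1) * c ((k + m - 1) % N + 1)
          - c ((j + m - 1) % N + 1) * s ((k + m - 1) % N + 1))
      = ∑ j ∈ Icc 1 N, ∑ k ∈ Icc (j+1) N, (s j * c k - c j * s k) := by
  induction m with
  | zero =>
      refine Finset.sum_congr rfl fun j hj => Finset.sum_congr rfl fun k hk => ?_
      simp only [mem_Icc] at hj hk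
      rw [show (j + 0 - 1) % N + 1 = j by rw [Nat.mod_eq_of_lt (by omega)]; omega,
        show (k + 0 - 1) % N + 1 = k by rw [Nat.mod_eq_of_lt (by omega)]; omega]
  | succ m ih =>
      have key : ∀ x : ℕ, (x + (m + 1) - 1) % N + 1 = ((x % N + 1) + m - 1) % N + 1 := by
        intro x
        congr 1
        rw [show x + (m + 1) - 1 = x + m by omega, show x % N + 1 + m - 1 = x % N + m by omega,
          Nat.mod_add_mod]
      have step : ∑ j ∈ Icc 1 N, ∑ k ∈ Icc (j+1) N,
          (s ((j + (m+1) - 1) % N + 1) * c ((k + (m+1) - 1) % N + 1)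
            - c ((j + (m+1) - 1) % N + 1) * s ((k + (m+1) - 1) % N + 1))
          = ∑ j ∈ Icc 1 N, ∑ k ∈ Icc (j+1) N,
            (s (((j % N + 1) + m - 1) % N + 1) * c (((k % N + 1) + m - 1) % N + 1)
              - c (((j % N + 1) + m - 1) % N + 1) * s (((k % N + 1) + m - 1) % N + 1)) := by
        refine Finset.sum_congr rfl fun j _ => Finset.sum_congr rfl fun k _ => ?_
        rw [key j, key k]
      rw [step]
      rw [shift1 N hN (fun x y =>
          s ((x + m - 1) % N + 1) * c ((y + m - 1) % N + 1)
            - c ((x + m - 1) % N + 1) * s ((y + m - 1) % N + 1))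
        (fun j k => by ring)
        (fun j => by
          rw [Finset.sum_sub_distrib, ← Finset.mul_sum, ← Finset.mul_sum,
            reidx N hN c m, reidx N hN s m, hc, hs]
          ring)]
      exact ih

private lemma core (N : ℕ) (hN : 3 ≤ N) (ψ μ : ℕ → ℝ)
    (hcos : ∑ k ∈ Icc 1 N, μ k * Real.cos (ψ k) = 0)
    (hsin : ∑ k ∈ Icc 1 N, μ k * Real.sin (ψ k) = 0)
    (hD : Real.sin (ψ N - ψ (N-1)) ≠ 0) :
    -(1/2) * ∑ j ∈ Icc 1 (N-2),
        Real.sin (ψ N - ψ j) * Real.sin (ψ (N-1) - ψ j)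
          / Real.sin (ψ N - ψ (N-1)) * (μ j)^2
      - ∑ j ∈ Icc 1 (N-2), ∑ k ∈ Icc (j+1) (N-2),
          Real.sin (ψ N - ψ j) * Real.sin (ψ (N-1) - ψ k)
            / Real.sin (ψ N - ψ (N-1)) * (μ j * μ k)
      = -(1/2) * ∑ j ∈ Icc 1 N, ∑ k ∈ Icc (j+1) N,
          (μ j * Real.sin (ψ j) * (μ k * Real.cos (ψ k))
            - μ j * Real.cos (ψ j) * (μ k * Real.sin (ψ k))) := by
  have h1N : (1:ℕ) ≤ N - 1 := by omega
  have h2N : (2:ℕ) ≤ N := by omega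
  set D := Real.sin (ψ N - ψ (N-1)) with hDdef
  set A := ∑ j ∈ Icc 1 (N-2), μ j * Real.sin (ψ N - ψ j) with hAdef
  set B := ∑ j ∈ Icc 1 (N-2), μ j * Real.sin (ψ (N-1) - ψ j) with hBdef
  set SD := ∑ j ∈ Icc 1 (N-2),
      (μ j * Real.sin (ψ N - ψ j)) * (μ j * Real.sin (ψ (N-1) - ψ j)) with hSDdef
  set SX := ∑ j ∈ Icc 1 (N-2), ∑ k ∈ Icc (j+1) (N-2),
      (μ j * Real.sin (ψ N - ψ j)) * (μ k * Real.sin (ψ (N-1) - ψ k)) with hSXdef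
  set SY := ∑ j ∈ Icc 1 (N-2), ∑ k ∈ Icc (j+1) (N-2),
      (μ k * Real.sin (ψ N - ψ k)) * (μ j * Real.sin (ψ (N-1) - ψ j)) with hSYdef
  set T := ∑ j ∈ Icc 1 (N-2), ∑ k ∈ Icc (j+1) (N-2),
      μ j * μ k * Real.sin (ψ j - ψ k) with hTdef
  -- linear consequences of the closing condition
  have hA : ∀ t : ℝ, ∑ k ∈ Icc 1 N, μ k * Real.sin (t - ψ k) = 0 := by
    intro t
    have e : ∀ k ∈ Icc 1 N, μ k * Real.sin (t - ψ k)
        = Real.sin t * (μ k * Real.cos (ψ k)) - Real.cos t * (μ k * Real.sin (ψ k)) := by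
      intro k _; rw [Real.sin_sub]; ring
    rw [Finset.sum_congr rfl e, Finset.sum_sub_distrib, ← Finset.mul_sum, ← Finset.mul_sum,
      hcos, hsin]
    ring
  have hv : μ (N-1) * D = -A := by
    have h0 := hA (ψ N)
    rw [sum_split _ h1N h2N] at h0
    have hz : μ N * Real.sin (ψ N - ψ N) = 0 := by rw [sub_self, Real.sin_zero, mul_zero]
    rw [hz] at h0
    rw [hAdef]; linarith
  have hw : μ N * D = B := by
    have h0 := hA (ψ (N-1))
    rw [sum_split _ h1N h2N] at h0
    have hz : μ (N-1) * Real.sin (ψ (N-1) - ψ (N-1)) = 0 := by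
      rw [sub_self, Real.sin_zero, mul_zero]
    have hz2 : Real.sin (ψ (N-1) - ψ N) = -D := by
      rw [hDdef, show ψ (N-1) - ψ N = -(ψ N - ψ (N-1)) by ring, Real.sin_neg]
    rw [hz, hz2, mul_neg] at h0
    rw [hBdef]; linarith
  -- key quadratic relations
  have hT : D * T = SX - SY := by
    rw [hTdef, Finset.mul_sum, hSXdef, hSYdef, ← Finset.sum_sub_distrib]
    refine Finset.sum_congr rfl fun j _ => ?_
    rw [Finset.mul_sum, ← Finset.sum_sub_distrib]
    refine Finset.sum_congr rfl fun k _ => ?_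
    have hp := pluck (ψ N) (ψ (N-1)) (ψ j) (ψ k)
    rw [hDdef]
    linear_combination (-(μ j * μ k)) * hp
  have hAB : A * B = SD + (SX + SY) := by
    have hsq := sq_split (N-2)
      (fun j k => (μ j * Real.sin (ψ N - ψ j)) * (μ k * Real.sin (ψ (N-1) - ψ k)))
    rw [hAdef, hBdef, Finset.sum_mul_sum]
    rw [hsq]
    simp only [Finset.sum_add_distrib]
    rw [hSDdef, hSXdef, hSYdef]
  -- convert the LHS sums
  have hL1 : ∑ j ∈ Icc 1 (N-2),
      Real.sin (ψ N - ψ j) * Real.sin (ψ (N-1) - ψ j) / D * (μ j)^2 = SD * D⁻¹ := by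
    rw [hSDdef, Finset.sum_mul]
    refine Finset.sum_congr rfl fun j _ => ?_
    rw [div_eq_mul_inv]; ring
  have hL2 : ∑ j ∈ Icc 1 (N-2), ∑ k ∈ Icc (j+1) (N-2),
      Real.sin (ψ N - ψ j) * Real.sin (ψ (N-1) - ψ k) / D * (μ j * μ k) = SX * D⁻¹ := by
    rw [hSXdef, Finset.sum_mul]
    refine Finset.sum_congr rfl fun j _ => ?_
    rw [Finset.sum_mul]
    refine Finset.sum_congr rfl fun k _ => ?_
    rw [div_eq_mul_inv]; ring
  -- convert and split the RHS sum
  have hR0 : ∀ j ∈ Icc 1 N, ∀ k ∈ Icc (j+1) N,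
      μ j * Real.sin (ψ j) * (μ k * Real.cos (ψ k))
        - μ j * Real.cos (ψ j) * (μ k * Real.sin (ψ k))
      = μ j * μ k * Real.sin (ψ j - ψ k) := by
    intro j _ k _; rw [Real.sin_sub]; ring
  have hsplit : ∑ j ∈ Icc 1 N, ∑ k ∈ Icc (j+1) N, μ j * μ k * Real.sin (ψ j - ψ k)
      = T + ((∑ j ∈ Icc 1 (N-2), μ j * μ (N-1) * Real.sin (ψ j - ψ (N-1)))
          + (∑ j ∈ Icc 1 (N-2), μ j * μ N * Real.sin (ψ j - ψ N)))
        + μ (N-1) * μ N * Real.sin (ψ (N-1) - ψ N) := by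
    rw [sum_split (fun j => ∑ k ∈ Icc (j+1) N, μ j * μ k * Real.sin (ψ j - ψ k)) h1N h2N]
    rw [show Icc (N+1) N = ∅ from Finset.Icc_eq_empty (by omega), Finset.sum_empty, add_zero]
    rw [show Icc ((N-1)+1) N = {N} by rw [show N-1+1 = N by omega, Finset.Icc_self],
      Finset.sum_singleton]
    congr 1
    have hinner : ∀ j ∈ Icc 1 (N-2),
        ∑ k ∈ Icc (j+1) N, μ j * μ k * Real.sin (ψ j - ψ k)
          = (∑ k ∈ Icc (j+1) (N-2), μ j * μ k * Real.sin (ψ j - ψ k))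
            + μ j * μ (N-1) * Real.sin (ψ j - ψ (N-1))
            + μ j * μ N * Real.sin (ψ j - ψ N) := by
      intro j hj
      simp only [mem_Icc] at hj
      exact sum_split _ (by omega) h2N
    rw [Finset.sum_congr rfl hinner]
    simp only [Finset.sum_add_distrib]
    rw [hTdef]
    ring
  have hU : ∑ j ∈ Icc 1 (N-2), μ j * μ (N-1) * Real.sin (ψ j - ψ (N-1)) = -(B * μ (N-1)) := by
    rw [hBdef, Finset.sum_mul, ← Finset.sum_neg_distrib]
    refine Finset.sum_congr rfl fun j _ => ?_
    rw [show ψ j - ψ (N-1) = -(ψ (N-1) - ψ j) by ring, Real.sin_neg]; ring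
  have hV : ∑ j ∈ Icc 1 (N-2), μ j * μ N * Real.sin (ψ j - ψ N) = -(A * μ N) := by
    rw [hAdef, Finset.sum_mul, ← Finset.sum_neg_distrib]
    refine Finset.sum_congr rfl fun j _ => ?_
    rw [show ψ j - ψ N = -(ψ N - ψ j) by ring, Real.sin_neg]; ring
  have hW : Real.sin (ψ (N-1) - ψ N) = -D := by
    rw [hDdef, show ψ (N-1) - ψ N = -(ψ N - ψ (N-1)) by ring, Real.sin_neg]
  -- put everything together
  rw [hL1, hL2, Finset.sum_congr rfl (fun j hj => Finset.sum_congr rfl (hR0 j hj)),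
    hsplit, hU, hV, hW]
  have hT' : T = (SX - SY) * D⁻¹ := by
    field_simp
    linarith [hT]
  have hP : μ (N-1) = -A * D⁻¹ := by
    field_simp
    linarith [hv]
  have hQ : μ N = B * D⁻¹ := by
    field_simp
    linarith [hw]
  rw [hT', hP, hQ]
  field_simp
  linear_combination hAB


end AuxCyclic

section MainThm
open Finset

/- ## Main theorem -/

/-- Invariance of the signed-area formula under cyclic relabelling of the vertices. -/
theorem stmt1 (N : ℕ) (hN : 3 ≤ N) (θ lam : ℕ → ℝ)
    (hsum : ∑ k ∈ Finset.Icc 1 N, θ k = 2 * Real.pi)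
    (hsinN : Real.sin (θ N) ≠ 0)
    (hclose : ∑ k ∈ Finset.Icc 1 N,
        (lam k : ℂ) * Complex.exp (-(phiAng θ k : ℂ) * Complex.I) = 0)
    (σ : ℕ → ℕ) (hσ : ∃ m : ℕ, ∀ j, σ j = (j + m - 1) % N + 1)
    (hσsin : Real.sin (phiAng θ (σ N) - phiAng θ (σ (N-1))) ≠ 0) :
    -(1/2) * ∑ j ∈ Finset.Icc 1 (N-2),
        Real.sin (phiAng θ (σ N) - phiAng θ (σ j))
          * Real.sin (phiAng θ (σ (N-1)) - phiAng θ (σ j))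
          / Real.sin (phiAng θ (σ N) - phiAng θ (σ (N-1))) * (lam (σ j))^2
      - ∑ j ∈ Finset.Icc 1 (N-2), ∑ k ∈ Finset.Icc (j+1) (N-2),
          Real.sin (phiAng θ (σ N) - phiAng θ (σ j))
            * Real.sin (phiAng θ (σ (N-1)) - phiAng θ (σ k))
            / Real.sin (phiAng θ (σ N) - phiAng θ (σ (N-1))) * (lam (σ j) * lam (σ k))
      = Qform N θ lam := by
  obtain ⟨m, hm⟩ := hσ
  have hN1 : (1:ℕ) ≤ N := by omega
  -- real and imaginary parts of the closing condition
  have hexp := hclose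
  rw [Finset.sum_congr rfl (fun k _ => exp_decomp (lam k) (phiAng θ k))] at hexp
  have hcos : ∑ k ∈ Icc 1 N, lam k * Real.cos (phiAng θ k) = 0 := by
    have h0 := congrArg Complex.re hexp
    simpa [Complex.re_sum, Complex.cos_ofReal_re] using h0
  have hsin : ∑ k ∈ Icc 1 N, lam k * Real.sin (phiAng θ k) = 0 := by
    have h0 := congrArg Complex.im hexp
    simp [Complex.im_sum] at h0
    simpa [Finset.sum_neg_distrib, neg_eq_zero, Complex.sin_ofReal_re] using h0
  -- sin θ_N is the denominator sine
  have hstep : phiAng θ N - phiAng θ (N-1) = θ N := by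
    unfold phiAng
    conv_lhs => rw [show N = (N-1)+1 by omega]
    rw [Finset.sum_Icc_succ_top (by omega), show N-1+1 = N by omega]
    ring
  have heqsin : Real.sin (θ N) = Real.sin (phiAng θ N - phiAng θ (N-1)) := by rw [hstep]
  -- apply the core lemma to the original labelling
  have hQ := core N hN (phiAng θ) lam hcos hsin (by rw [← heqsin]; exact hsinN)
  have hQform : Qform N θ lam
      = -(1/2) * ∑ j ∈ Icc 1 N, ∑ k ∈ Icc (j+1) N,
          (lam j * Real.sin (phiAng θ j) * (lam k * Real.cos (phiAng θ k))
            - lam j * Real.cos (phiAng θ j) * (lam k * Real.sin (phiAng θ k))) := by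
    unfold Qform
    rw [heqsin]
    exact hQ
  -- apply the core lemma to the cyclically relabelled data
  have hcosσ : ∑ k ∈ Icc 1 N, lam (σ k) * Real.cos (phiAng θ (σ k)) = 0 := by
    simp only [hm]
    exact (reidx N hN1 (fun k => lam k * Real.cos (phiAng θ k)) m).trans hcos
  have hsinσ : ∑ k ∈ Icc 1 N, lam (σ k) * Real.sin (phiAng θ (σ k)) = 0 := by
    simp only [hm]
    exact (reidx N hN1 (fun k => lam k * Real.sin (phiAng θ k)) m).trans hsin
  have hσcore := core N hN (fun k => phiAng θ (σ k)) (fun k => lam (σ k)) hcosσ hsinσ hσsin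
  calc -(1/2) * ∑ j ∈ Finset.Icc 1 (N-2),
        Real.sin (phiAng θ (σ N) - phiAng θ (σ j))
          * Real.sin (phiAng θ (σ (N-1)) - phiAng θ (σ j))
          / Real.sin (phiAng θ (σ N) - phiAng θ (σ (N-1))) * (lam (σ j))^2
      - ∑ j ∈ Finset.Icc 1 (N-2), ∑ k ∈ Finset.Icc (j+1) (N-2),
          Real.sin (phiAng θ (σ N) - phiAng θ (σ j))
            * Real.sin (phiAng θ (σ (N-1)) - phiAng θ (σ k))
            / Real.sin (phiAng θ (σ N) - phiAng θ (σ (N-1))) * (lam (σ j) * lam (σ k))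
      = -(1/2) * ∑ j ∈ Icc 1 N, ∑ k ∈ Icc (j+1) N,
          (lam (σ j) * Real.sin (phiAng θ (σ j)) * (lam (σ k) * Real.cos (phiAng θ (σ k)))
            - lam (σ j) * Real.cos (phiAng θ (σ j)) * (lam (σ k) * Real.sin (phiAng θ (σ k)))) :=
        hσcore
    _ = -(1/2) * ∑ j ∈ Icc 1 N, ∑ k ∈ Icc (j+1) N,
          (lam j * Real.sin (phiAng θ j) * (lam k * Real.cos (phiAng θ k))
            - lam j * Real.cos (phiAng θ j) * (lam k * Real.sin (phiAng θ k))) := by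
        congr 1
        simp only [hm]
        exact cyc N hN1 (fun k => lam k * Real.cos (phiAng θ k))
          (fun k => lam k * Real.sin (phiAng θ k)) hcos hsin m
    _ = Qform N θ lam := hQform.symm

end MainThm
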